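/- Let T > 0. Let (σ_n)_{n≥1} be positive real numbers with σ_n → 0, and for each n let φ_n : ℝ → [0,1] be Borel measurable with φ_n(x) = 0 whenever |x| ≥ σ_n/2. Let y_n, y : [0,1] × [0,T] → ℝ be such that v ↦ y_n(v,t) and v ↦ y(v,t) are Lebesgue measurable for every t ∈ [0,T], and suppose there is a Borel set A ⊆ [0,1] of Lebesgue measure 1 such that for every v ∈ A, sup_{t∈[0,T]} |y_n(v,t) − y(v,t)| → 0 as n → ∞. Then for every u ∈ A and every t ∈ [0,T], limsup_{n→∞} ∫₀¹ φ_n(y_n(u,t) − y_n(v,t))² dv ≤ Leb{v ∈ [0,1] : y(v,t) = y(u,t)}. -/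

import Mathlib

open MeasureTheory

/-- Let `σ_n → 0` with `σ_n > 0`, `φ_n : ℝ → [0,1]` Borel with
`φ_n(x) = 0` whenever `|x| ≥ σ_n/2`. Let `y_n, y : [0,1] × [0,T] → ℝ` be measurable in
the space variable, and let `A ⊆ [0,1]` be Borel of measure 1 such that for every
`v ∈ A`, `sup_{t∈[0,T]} |y_n(v,t) − y(v,t)| → 0`. Then for every `u ∈ A` and `t ∈ [0,T]`,
`limsup_n ∫₀¹ φ_n(y_n(u,t) − y_n(v,t))² dv ≤ Leb{v ∈ [0,1] | y(v,t) = y(u,t)}`. -/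
theorem stmt9 (T : ℝ) (hT : 0 < T)
    (σ : ℕ → ℝ) (hσpos : ∀ n, 0 < σ n)
    (hσ : Filter.Tendsto σ Filter.atTop (nhds 0))
    (φ : ℕ → ℝ → ℝ) (hφm : ∀ n, Measurable (φ n))
    (hφ01 : ∀ n x, φ n x ∈ Set.Icc (0:ℝ) 1)
    (hφ0 : ∀ n x, σ n / 2 ≤ |x| → φ n x = 0)
    (yn : ℕ → ℝ → ℝ → ℝ) (y : ℝ → ℝ → ℝ)
    (hynm : ∀ n, ∀ t ∈ Set.Icc (0:ℝ) T, Measurable fun v => yn n v t)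
    (hym : ∀ t ∈ Set.Icc (0:ℝ) T, Measurable fun v => y v t)
    (A : Set ℝ) (hAmeas : MeasurableSet A) (hAsub : A ⊆ Set.Icc 0 1)
    (hAvol : volume A = 1)
    (hconv : ∀ v ∈ A,
      TendstoUniformlyOn (fun n t => yn n v t) (y v) Filter.atTop (Set.Icc 0 T)) :
    ∀ u ∈ A, ∀ t ∈ Set.Icc (0:ℝ) T,
      Filter.limsup
          (fun n => ∫ v in Set.Icc (0:ℝ) 1, (φ n (yn n u t - yn n v t)) ^ 2)
          Filter.atTop
        ≤ (volume {v ∈ Set.Icc (0:ℝ) 1 | y v t = y u t}).toReal := by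
  intro u hu t ht
  set μ := volume.restrict (Set.Icc (0:ℝ) 1) with hμ
  have hμuniv : μ Set.univ = 1 := by
    simp [hμ, Real.volume_Icc]
  -- the ENNReal-valued integrands
  set F : ℕ → ℝ → ENNReal := fun n v => ENNReal.ofReal ((φ n (yn n u t - yn n v t)) ^ 2)
    with hF
  have hFmeas : ∀ n, Measurable (F n) := by
    intro n
    apply Measurable.ennreal_ofReal
    exact (((hφm n).comp (measurable_const.sub (hynm n t ht))).pow measurable_const)
  have hF1 : ∀ n v, F n v ≤ 1 := by
    intro n v
    have h := hφ01 n (yn n u t - yn n v t)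
    rw [hF]
    calc ENNReal.ofReal ((φ n (yn n u t - yn n v t)) ^ 2)
        ≤ ENNReal.ofReal 1 := by
          apply ENNReal.ofReal_le_ofReal
          nlinarith [h.1, h.2]
      _ = 1 := ENNReal.ofReal_one
  -- the real integral equals toReal of the lintegral
  have hint : ∀ n, ∫ v in Set.Icc (0:ℝ) 1, (φ n (yn n u t - yn n v t)) ^ 2
      = (∫⁻ v, F n v ∂μ).toReal := by
    intro n
    rw [integral_eq_lintegral_of_nonneg_ae]
    · exact Filter.Eventually.of_forall fun v => sq_nonneg _
    · exact (((hφm n).comp (measurable_const.sub (hynm n t ht))).pow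
        measurable_const).aestronglyMeasurable
  have hL1 : ∀ n, (∫⁻ v, F n v ∂μ) ≤ 1 := by
    intro n
    calc ∫⁻ v, F n v ∂μ ≤ ∫⁻ _, 1 ∂μ := lintegral_mono (fun v => hF1 n v)
      _ = μ Set.univ := lintegral_one
      _ = 1 := hμuniv
  -- the target set
  set S : Set ℝ := {v ∈ Set.Icc (0:ℝ) 1 | y v t = y u t} with hS
  have hS' : S = ((fun v => y v t) ⁻¹' {y u t}) ∩ Set.Icc (0:ℝ) 1 := by
    ext v; simp [hS, and_comm]
  have hSmeas' : MeasurableSet ((fun v => y v t) ⁻¹' {y u t}) :=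
    (hym t ht) (measurableSet_singleton _)
  -- a.e. v is in A
  have hAae : ∀ᵐ v ∂μ, v ∈ A := by
    rw [ae_iff]
    have : μ {v | ¬ v ∈ A} = volume (Set.Icc (0:ℝ) 1 \ A) := by
      rw [show {v | ¬ v ∈ A} = Aᶜ from rfl, hμ, Measure.restrict_apply hAmeas.compl]
      congr 1
      ext v; simp [Set.mem_diff, and_comm]
    rw [this]
    have hd : volume (Set.Icc (0:ℝ) 1 \ A) = volume (Set.Icc (0:ℝ) 1) - volume A := by
      apply measure_diff hAsub hAmeas.nullMeasurableSet
      rw [hAvol]; exact ENNReal.one_ne_top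
    rw [hd, hAvol, Real.volume_Icc]
    simp
  -- pointwise limsup bound
  have hpt : ∀ᵐ v ∂μ, Filter.limsup (fun n => F n v) Filter.atTop
      ≤ ((fun v => y v t) ⁻¹' {y u t}).indicator (fun _ => 1) v := by
    filter_upwards [hAae] with v hv
    by_cases hvy : y v t = y u t
    · have : ((fun v => y v t) ⁻¹' {y u t}).indicator (fun _ => (1:ENNReal)) v = 1 := by
        rw [Set.indicator_of_mem]; exact hvy
      rw [this]
      exact Filter.limsup_le_of_le (by isBoundedDefault)
        (Filter.Eventually.of_forall fun n => hF1 n v)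
    · -- eventually F n v = 0
      have hdpos : 0 < |y u t - y v t| := by
        rw [abs_pos, sub_ne_zero]; exact fun h => hvy h.symm
      have hut : Filter.Tendsto (fun n => yn n u t) Filter.atTop (nhds (y u t)) :=
        (hconv u hu).tendsto_at ht
      have hvt : Filter.Tendsto (fun n => yn n v t) Filter.atTop (nhds (y v t)) :=
        (hconv v hv).tendsto_at ht
      have hdiff : Filter.Tendsto (fun n => |yn n u t - yn n v t| - σ n / 2)
          Filter.atTop (nhds (|y u t - y v t| - 0 / 2)) :=
        ((hut.sub hvt).abs.sub (hσ.div_const 2))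
      have hev : ∀ᶠ n in Filter.atTop, 0 < |yn n u t - yn n v t| - σ n / 2 := by
        apply hdiff.eventually (eventually_gt_nhds (by simpa using hdpos))
      have hev0 : ∀ᶠ n in Filter.atTop, F n v = 0 := by
        filter_upwards [hev] with n hn
        have : φ n (yn n u t - yn n v t) = 0 := hφ0 n _ (by linarith)
        simp [hF, this]
      calc Filter.limsup (fun n => F n v) Filter.atTop ≤ 0 :=
            Filter.limsup_le_of_le (by isBoundedDefault)
              (by filter_upwards [hev0] with n hn; exact hn.le)
        _ ≤ _ := zero_le'
  -- reverse Fatou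
  have hfatou : Filter.limsup (fun n => ∫⁻ v, F n v ∂μ) Filter.atTop ≤ volume S := by
    calc Filter.limsup (fun n => ∫⁻ v, F n v ∂μ) Filter.atTop
        ≤ ∫⁻ v, Filter.limsup (fun n => F n v) Filter.atTop ∂μ := by
          apply limsup_lintegral_le (fun _ => (1:ENNReal)) hFmeas
            (fun n => Filter.Eventually.of_forall fun v => hF1 n v)
          rw [lintegral_one, hμuniv]; exact ENNReal.one_ne_top
      _ ≤ ∫⁻ v, ((fun v => y v t) ⁻¹' {y u t}).indicator (fun _ => 1) v ∂μ :=
          lintegral_mono_ae hpt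
      _ = μ ((fun v => y v t) ⁻¹' {y u t}) := by
          rw [lintegral_indicator hSmeas']
          simp
      _ = volume S := by
          rw [hμ, Measure.restrict_apply hSmeas', hS']
  -- conclude
  have hSne : volume S ≠ ⊤ := by
    apply ne_top_of_le_ne_top (b := volume (Set.Icc (0:ℝ) 1))
    · rw [Real.volume_Icc]; simp
    · exact measure_mono (fun v hv => hv.1)
  have hlim : Filter.limsup
      (fun n => ∫ v in Set.Icc (0:ℝ) 1, (φ n (yn n u t - yn n v t)) ^ 2) Filter.atTop
      = (Filter.limsup (fun n => ∫⁻ v, F n v ∂μ) Filter.atTop).toReal := by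
    simp_rw [hint]
    exact ENNReal.limsup_toReal_eq ENNReal.one_ne_top (Filter.Eventually.of_forall hL1)
  rw [hlim]
  exact ENNReal.toReal_mono hSne hfatou
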